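/- Let t ≥ r be positive integers, let γ ∈ [0,1] and δ ∈ (0, γ] be reals, and let X_0,…,X_{t−1} be independent random variables taking values in [0,1] with E[X_i] = p for every i, where p ≤ γ − δ. Then P( for every i with r ≤ i ≤ t, X_0 + X_1 + ⋯ + X_{i−1} > i·γ + i^{2/3} ) ≤ e^{−2δ² t}. Equivalently, the Separate algorithm returns true with probability at most e^{−2δ² t}. -/

import Mathlib

open MeasureTheory ProbabilityTheory

namespace Stmt16Aux

/-- Core analytic inequality behind Hoeffding's lemma for `[0,1]`-valued variables. -/
lemma log_bound {p : ℝ} (hp0 : 0 ≤ p) (hp1 : p ≤ 1) {l : ℝ} (hl : 0 ≤ l) :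
    1 - p + p * Real.exp l ≤ Real.exp (l * p + l ^ 2 / 8) := by
  set D : ℝ → ℝ := fun x => 1 - p + p * Real.exp x with hDdef
  have hD1 : ∀ x : ℝ, 0 ≤ x → (1 : ℝ) ≤ D x := by
    intro x hx
    have := mul_le_mul_of_nonneg_left (Real.one_le_exp hx) hp0
    simp only [hDdef]; nlinarith
  have hDpos : ∀ x : ℝ, 0 ≤ x → 0 < D x := fun x hx => lt_of_lt_of_le one_pos (hD1 x hx)
  have hDderiv : ∀ x : ℝ, HasDerivAt D (p * Real.exp x) x := fun x =>
    ((Real.hasDerivAt_exp x).const_mul p).const_add (1 - p)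
  set g : ℝ → ℝ := fun x => p + x / 4 - p * Real.exp x / D x with hgdef
  have hgderiv : ∀ x : ℝ, 0 ≤ x → HasDerivAt g
      (1 / 4 - (p * Real.exp x * D x - p * Real.exp x * (p * Real.exp x)) / D x ^ 2) x := by
    intro x hx
    have h1 : HasDerivAt (fun y : ℝ => p + y / 4) (1 / 4) x :=
      ((hasDerivAt_id x).div_const 4).const_add p
    have h2 : HasDerivAt (fun y : ℝ => p * Real.exp y) (p * Real.exp x) x :=
      (Real.hasDerivAt_exp x).const_mul p
    have h3 := h2.div (hDderiv x) (ne_of_gt (hDpos x hx))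
    exact h1.sub h3
  have hgderiv_nonneg : ∀ x : ℝ, 0 ≤ x →
      0 ≤ 1 / 4 - (p * Real.exp x * D x - p * Real.exp x * (p * Real.exp x)) / D x ^ 2 := by
    intro x hx
    have hE := Real.exp_pos x
    have hDx := hDpos x hx
    rw [sub_nonneg, div_le_iff₀ (by positivity)]
    have hDval : D x = 1 - p + p * Real.exp x := rfl
    nlinarith [sq_nonneg (1 - p - p * Real.exp x)]
  have hgmono : MonotoneOn g (Set.Ici (0 : ℝ)) := by
    refine monotoneOn_of_deriv_nonneg (convex_Ici 0) ?_ ?_ ?_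
    · exact fun x hx => ((hgderiv x hx).continuousAt).continuousWithinAt
    · intro x hx
      rw [interior_Ici] at hx
      exact ((hgderiv x (le_of_lt hx)).differentiableAt).differentiableWithinAt
    · intro x hx
      rw [interior_Ici] at hx
      rw [(hgderiv x (le_of_lt hx)).deriv]
      exact hgderiv_nonneg x (le_of_lt hx)
  have hg0 : g 0 = 0 := by
    have hD0 : D 0 = 1 := by simp [hDdef]
    simp [hgdef, hD0]
  have hg_nonneg : ∀ x : ℝ, 0 ≤ x → 0 ≤ g x := by
    intro x hx
    have := hgmono (Set.self_mem_Ici) (Set.mem_Ici.mpr hx) hx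
    rwa [hg0] at this
  set f : ℝ → ℝ := fun x => x * p + x ^ 2 / 8 - Real.log (D x) with hfdef
  have hfderiv : ∀ x : ℝ, 0 ≤ x → HasDerivAt f (g x) x := by
    intro x hx
    have h1 : HasDerivAt (fun y : ℝ => y * p) (1 * p) x := (hasDerivAt_id x).mul_const p
    have h2 : HasDerivAt (fun y : ℝ => y ^ 2 / 8) (((2 : ℕ) : ℝ) * x ^ 1 / 8) x :=
      (hasDerivAt_pow 2 x).div_const 8
    have h3 : HasDerivAt (fun y : ℝ => Real.log (D y)) (p * Real.exp x / D x) x :=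
      (hDderiv x).log (ne_of_gt (hDpos x hx))
    have := (h1.add h2).sub h3
    refine HasDerivAt.congr_deriv this ?_
    show _ = p + x / 4 - p * Real.exp x / D x
    push_cast
    ring
  have hfmono : MonotoneOn f (Set.Ici (0 : ℝ)) := by
    refine monotoneOn_of_deriv_nonneg (convex_Ici 0) ?_ ?_ ?_
    · exact fun x hx => ((hfderiv x hx).continuousAt).continuousWithinAt
    · intro x hx
      rw [interior_Ici] at hx
      exact ((hfderiv x (le_of_lt hx)).differentiableAt).differentiableWithinAt
    · intro x hx
      rw [interior_Ici] at hx
      rw [(hfderiv x (le_of_lt hx)).deriv]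
      exact hg_nonneg x (le_of_lt hx)
  have hf0 : f 0 = 0 := by
    have hD0 : D 0 = 1 := by simp [hDdef]
    simp [hfdef, hD0]
  have hfl : 0 ≤ f l := by
    have := hfmono (Set.self_mem_Ici) (Set.mem_Ici.mpr hl) hl
    rwa [hf0] at this
  have hlog : Real.log (D l) ≤ l * p + l ^ 2 / 8 := by
    simp only [hfdef] at hfl; linarith
  exact (Real.log_le_iff_le_exp (hDpos l hl)).mp hlog

variable {Ω : Type*} [MeasurableSpace Ω] (P : Measure Ω) [IsProbabilityMeasure P]

lemma int_exp (Y : Ω → ℝ) (hm : Measurable Y) (h01 : ∀ ω, Y ω ∈ Set.Icc (0 : ℝ) 1)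
    {l : ℝ} (hl : 0 ≤ l) : Integrable (fun ω => Real.exp (l * Y ω)) P := by
  refine Integrable.mono' (integrable_const (Real.exp l))
    ((hm.const_mul l).exp).aestronglyMeasurable ?_
  filter_upwards with ω
  rw [Real.norm_eq_abs, abs_of_pos (Real.exp_pos _)]
  refine Real.exp_le_exp.mpr ?_
  have := mul_le_mul_of_nonneg_left (h01 ω).2 hl
  linarith

lemma exp_int_bound (Y : Ω → ℝ) (hm : Measurable Y) (h01 : ∀ ω, Y ω ∈ Set.Icc (0 : ℝ) 1)
    {p : ℝ} (hmean : ∫ ω, Y ω ∂P = p) {l : ℝ} (hl : 0 ≤ l) :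
    ∫ ω, Real.exp (l * Y ω) ∂P ≤ Real.exp (l * p + l ^ 2 / 8) := by
  have hYint : Integrable Y P := by
    refine Integrable.mono' (integrable_const 1) hm.aestronglyMeasurable ?_
    filter_upwards with ω
    rw [Real.norm_eq_abs]
    exact abs_le.mpr ⟨by linarith [(h01 ω).1], (h01 ω).2⟩
  have hp0 : 0 ≤ p := hmean ▸ integral_nonneg fun ω => (h01 ω).1
  have hp1 : p ≤ 1 := by
    rw [← hmean]
    calc ∫ ω, Y ω ∂P ≤ ∫ _, (1 : ℝ) ∂P := integral_mono hYint (integrable_const 1)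
          fun ω => (h01 ω).2
      _ = 1 := by simp
  have hrhs_int : Integrable (fun ω => 1 - Y ω + Y ω * Real.exp l) P :=
    ((integrable_const 1).sub hYint).add (hYint.mul_const _)
  calc ∫ ω, Real.exp (l * Y ω) ∂P
      ≤ ∫ ω, (1 - Y ω + Y ω * Real.exp l) ∂P := by
        refine integral_mono (int_exp P Y hm h01 hl) hrhs_int fun ω => ?_
        have := convexOn_exp.2 (Set.mem_univ (0 : ℝ)) (Set.mem_univ l)
          (sub_nonneg.mpr (h01 ω).2) (h01 ω).1 (by ring)
        simpa [smul_eq_mul, mul_comm] using this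
    _ = 1 - p + p * Real.exp l := by
        have h1 : Integrable (fun ω => 1 - Y ω) P := (integrable_const 1).sub hYint
        have h2 : Integrable (fun ω => Y ω * Real.exp l) P := hYint.mul_const _
        rw [integral_add h1 h2, integral_sub (integrable_const 1) hYint,
          integral_mul_const, hmean]
        simp
    _ ≤ Real.exp (l * p + l ^ 2 / 8) := log_bound hp0 hp1 hl

end Stmt16Aux

open Stmt16Aux

/-- **Failure probability of the Separate algorithm under low similarity.** Let
`t ≥ r` be positive integers, `γ ∈ [0,1]`, `δ ∈ (0, γ]`, and let `X_0,…,X_{t−1}` be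
independent `[0,1]`-valued random variables with common mean `p ≤ γ − δ`. Then the
probability that every index `i` with `r ≤ i ≤ t` satisfies
`X_0 + ⋯ + X_{i−1} > i·γ + i^{2/3}` (i.e. that `Separate` returns `true`) is at most
`e^{−2δ²t}`. -/
theorem stmt16 {Ω : Type*} [MeasurableSpace Ω] (P : Measure Ω) [IsProbabilityMeasure P]
    (t r : ℕ) (hr : 0 < r) (hrt : r ≤ t)
    (γ δ p : ℝ) (hγ0 : 0 ≤ γ) (hγ1 : γ ≤ 1) (hδ0 : 0 < δ) (hδγ : δ ≤ γ)
    (X : Fin t → Ω → ℝ) (hXmeas : ∀ i, Measurable (X i))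
    (hX01 : ∀ i ω, X i ω ∈ Set.Icc (0 : ℝ) 1)
    (hindep : iIndepFun (m := fun _ : Fin t => (inferInstance : MeasurableSpace ℝ)) X P)
    (hmean : ∀ i, ∫ ω, X i ω ∂P = p) (hp : p ≤ γ - δ) :
    P {ω | ∀ i : ℕ, r ≤ i → i ≤ t →
        (i : ℝ) * γ + (i : ℝ) ^ ((2 : ℝ) / 3)
          < ∑ j : Fin t, if (j : ℕ) < i then X j ω else 0}
      ≤ ENNReal.ofReal (Real.exp (-2 * δ ^ 2 * (t : ℝ))) := by
  classical
  set l : ℝ := 4 * δ with hldef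
  have hl : 0 ≤ l := by positivity
  set ε : ℝ := (t : ℝ) * γ + (t : ℝ) ^ ((2 : ℝ) / 3) with hεdef
  have hc : 0 ≤ (t : ℝ) ^ ((2 : ℝ) / 3) := Real.rpow_nonneg (Nat.cast_nonneg t) _
  -- event inclusion
  have hsub : {ω | ∀ i : ℕ, r ≤ i → i ≤ t →
        (i : ℝ) * γ + (i : ℝ) ^ ((2 : ℝ) / 3)
          < ∑ j : Fin t, if (j : ℕ) < i then X j ω else 0}
      ⊆ {ω | ε ≤ (∑ i : Fin t, X i) ω} := by
    intro ω hω
    have h := hω t hrt le_rfl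
    have hsum : (∑ j : Fin t, if (j : ℕ) < t then X j ω else 0) = ∑ j : Fin t, X j ω :=
      Finset.sum_congr rfl fun j _ => if_pos j.isLt
    rw [hsum] at h
    simpa [Finset.sum_apply] using le_of_lt h
  -- integrability and Chernoff
  have h_int : ∀ i ∈ Finset.univ, Integrable (fun ω => Real.exp (l * X i ω)) P :=
    fun i _ => int_exp P (X i) (hXmeas i) (hX01 i) hl
  have hS_int := hindep.integrable_exp_mul_sum hXmeas (s := Finset.univ) h_int
  have chern := measure_ge_le_exp_mul_mgf (μ := P) (X := ∑ i : Fin t, X i) ε hl hS_int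
  -- mgf bound
  have hmgf : mgf (∑ i : Fin t, X i) P l ≤ Real.exp (l * p + l ^ 2 / 8) ^ t := by
    rw [hindep.mgf_sum hXmeas Finset.univ]
    calc ∏ i : Fin t, mgf (X i) P l
        ≤ ∏ _i : Fin t, Real.exp (l * p + l ^ 2 / 8) := by
          refine Finset.prod_le_prod (fun i _ => mgf_nonneg) fun i _ => ?_
          exact exp_int_bound P (X i) (hXmeas i) (hX01 i) (hmean i) hl
      _ = Real.exp (l * p + l ^ 2 / 8) ^ t := by
          rw [Finset.prod_const, Finset.card_univ, Fintype.card_fin]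
  -- combine in ℝ
  have hreal : (P {ω | ε ≤ (∑ i : Fin t, X i) ω}).toReal
      ≤ Real.exp (-2 * δ ^ 2 * (t : ℝ)) := by
    calc (P {ω | ε ≤ (∑ i : Fin t, X i) ω}).toReal
        ≤ Real.exp (-l * ε) * mgf (∑ i : Fin t, X i) P l := chern
      _ ≤ Real.exp (-l * ε) * Real.exp (l * p + l ^ 2 / 8) ^ t := by
          exact mul_le_mul_of_nonneg_left hmgf (Real.exp_pos _).le
      _ = Real.exp (-l * ε + (t : ℝ) * (l * p + l ^ 2 / 8)) := by
          rw [← Real.exp_nat_mul, ← Real.exp_add]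
      _ ≤ Real.exp (-2 * δ ^ 2 * (t : ℝ)) := by
          refine Real.exp_le_exp.mpr ?_
          have ht0 : (0 : ℝ) ≤ (t : ℝ) := Nat.cast_nonneg t
          have hpγδ : (t : ℝ) * (l * p) ≤ (t : ℝ) * (l * (γ - δ)) := by
            have : l * p ≤ l * (γ - δ) := mul_le_mul_of_nonneg_left hp hl
            exact mul_le_mul_of_nonneg_left this ht0
          have hcl : 0 ≤ l * (t : ℝ) ^ ((2 : ℝ) / 3) := mul_nonneg hl hc
          simp only [hεdef, hldef] at *
          nlinarith [hpγδ, hcl]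
  -- back to ℝ≥0∞
  calc P {ω | ∀ i : ℕ, r ≤ i → i ≤ t →
        (i : ℝ) * γ + (i : ℝ) ^ ((2 : ℝ) / 3)
          < ∑ j : Fin t, if (j : ℕ) < i then X j ω else 0}
      ≤ P {ω | ε ≤ (∑ i : Fin t, X i) ω} := measure_mono hsub
    _ ≤ ENNReal.ofReal (Real.exp (-2 * δ ^ 2 * (t : ℝ))) := by
        rw [← ENNReal.ofReal_toReal (measure_ne_top P _)]
        exact ENNReal.ofReal_le_ofReal hreal
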